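/- The set B₁ is nowhere dense in the space H(A₁), and B₁ with the subspace topology inherited from H(A₁) is homeomorphic to the space ℚ of rational numbers with its usual (Euclidean) topology. -/

import Mathlib

open Set TopologicalSpace Topology

/-- The Hattori topology τ(A) on ℝ: generated by the Euclidean open sets together with
all sets [x, x+ε) with x ∈ ℝ \ A and ε > 0. -/
def hattori (A : Set ℝ) : TopologicalSpace ℝ :=
  TopologicalSpace.generateFrom
    ({s : Set ℝ | IsOpen s} ∪ {s : Set ℝ | ∃ x ∉ A, ∃ ε > 0, s = Set.Ico x (x + ε)})

/-- `B₁`: the set of left endpoints of the closed intervals appearing in the standard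
middle-thirds construction of the Cantor set. -/
def B1 : Set ℝ :=
  {x | ∃ n : ℕ, ∃ c : ℕ → ℝ, (∀ i, c i = 0 ∨ c i = 2) ∧
    x = ∑ i ∈ Finset.range n, c i / 3 ^ (i + 1)}

/-- `A₁ = ℝ \ B₁`. -/
def A1 : Set ℝ := B1ᶜ

lemma hattori_isOpen_of_isOpen {A s : Set ℝ} (h : IsOpen s) : (hattori A).IsOpen s :=
  TopologicalSpace.GenerateOpen.basic s (Or.inl h)

lemma hattori_isOpen_Ico {A : Set ℝ} {x : ℝ} (hx : x ∉ A) {ε : ℝ} (hε : 0 < ε) :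
    (hattori A).IsOpen (Ico x (x + ε)) :=
  TopologicalSpace.GenerateOpen.basic _ (Or.inr ⟨x, hx, ε, hε, rfl⟩)

lemma hattori_exists_Ico {A U : Set ℝ} (hU : (hattori A).IsOpen U) :
    ∀ x ∈ U, ∃ ε > 0, Ico x (x + ε) ⊆ U := by
  induction hU with
  | basic s hs =>
    rcases hs with h | ⟨y, _, ε, hε, rfl⟩
    · intro x hx
      have h' : IsOpen s := h
      rcases Metric.isOpen_iff.1 h' x hx with ⟨δ, hδ, hball⟩
      refine ⟨δ, hδ, fun z hz => hball ?_⟩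
      rw [Real.ball_eq_Ioo]
      exact ⟨by linarith [hz.1], hz.2⟩
    · intro x hx
      refine ⟨y + ε - x, by linarith [hx.2], fun z hz => ⟨le_trans hx.1 hz.1, by linarith [hz.2]⟩⟩
  | univ => exact fun x _ => ⟨1, one_pos, fun z _ => trivial⟩
  | inter s t _ _ ihs iht =>
    intro x hx
    rcases ihs x hx.1 with ⟨ε₁, hε₁, h₁⟩
    rcases iht x hx.2 with ⟨ε₂, hε₂, h₂⟩
    refine ⟨min ε₁ ε₂, lt_min hε₁ hε₂, fun z hz => ⟨h₁ ⟨hz.1, ?_⟩, h₂ ⟨hz.1, ?_⟩⟩⟩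
    · exact lt_of_lt_of_le hz.2 (by simp [min_le_left])
    · exact lt_of_lt_of_le hz.2 (by simp [min_le_right])
  | sUnion S _ ih =>
    rintro x ⟨s, hsS, hxs⟩
    rcases ih s hsS x hxs with ⟨ε, hε, h⟩
    exact ⟨ε, hε, h.trans (subset_sUnion_of_mem hsS)⟩

lemma hattori_nhds_basis {A : Set ℝ} {x : ℝ} (hx : x ∉ A) :
    (@nhds ℝ (hattori A) x).HasBasis (fun ε : ℝ => 0 < ε) (fun ε => Ico x (x + ε)) := by
  refine ⟨fun t => ?_⟩
  rw [@mem_nhds_iff ℝ (hattori A) x t]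
  constructor
  · rintro ⟨s, hst, hs, hxs⟩
    rcases hattori_exists_Ico hs x hxs with ⟨ε, hε, h⟩
    exact ⟨ε, hε, h.trans hst⟩
  · rintro ⟨ε, hε, h⟩
    exact ⟨Ico x (x + ε), h, hattori_isOpen_Ico hx hε, le_refl x, by linarith⟩

/-- tree parametrization of B1 -/
noncomputable def rr : List ℕ → ℝ
  | [] => 0
  | k :: t => (2 + rr t) / 3 ^ (k + 1)

/-- scale factor -/
noncomputable def wt : List ℕ → ℝ
  | [] => 1
  | k :: t => wt t / 3 ^ (k + 1)

lemma rr_nonneg (s : List ℕ) : 0 ≤ rr s := by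
  induction s with
  | nil => simp [rr]
  | cons k t ih => simp only [rr]; positivity

lemma rr_lt_one (s : List ℕ) : rr s < 1 := by
  induction s with
  | nil => norm_num [rr]
  | cons k t ih =>
    simp only [rr]
    rw [div_lt_one (by positivity)]
    have : (3:ℝ) ≤ 3 ^ (k+1) := by
      calc (3:ℝ) = 3 ^ 1 := by norm_num
      _ ≤ 3 ^ (k+1) := by apply pow_le_pow_right₀ (by norm_num); omega
    linarith

lemma rr_cons_lb (k : ℕ) (t : List ℕ) : 2 / 3 ^ (k+1) ≤ rr (k :: t) := by
  simp only [rr]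
  apply div_le_div_of_nonneg_right ?_ (by positivity)
  · linarith [rr_nonneg t]

lemma rr_cons_ub (k : ℕ) (t : List ℕ) : rr (k :: t) < 1 / 3 ^ k := by
  simp only [rr]
  rw [div_lt_div_iff₀ (by positivity) (by positivity)]
  have h3 : (3:ℝ) ^ (k+1) = 3 * 3 ^ k := by ring
  rw [h3]
  nlinarith [rr_lt_one t, pow_pos (show (0:ℝ) < 3 by norm_num) k]

lemma rr_cons_pos (k : ℕ) (t : List ℕ) : 0 < rr (k :: t) :=
  lt_of_lt_of_le (by positivity) (rr_cons_lb k t)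

lemma wt_pos (s : List ℕ) : 0 < wt s := by
  induction s with
  | nil => norm_num [wt]
  | cons k t ih => simp only [wt]; positivity

lemma wt_le_one (s : List ℕ) : wt s ≤ 1 := by
  induction s with
  | nil => norm_num [wt]
  | cons k t ih =>
    simp only [wt]
    rw [div_le_one (by positivity)]
    calc wt t ≤ 1 := ih
    _ ≤ 3 ^ (k+1) := one_le_pow₀ (by norm_num)

lemma rr_append (s t : List ℕ) : rr (s ++ t) = rr s + wt s * rr t := by
  induction s with
  | nil => simp [rr, wt]
  | cons k s' ih =>
    simp only [List.cons_append, rr, wt]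
    rw [ih]
    ring

lemma rr_injective : Function.Injective rr := by
  intro s
  induction s with
  | nil =>
    intro w h
    cases w with
    | nil => rfl
    | cons b w' => exact absurd h.symm (ne_of_gt (rr_cons_pos b w'))
  | cons a s' ih =>
    intro w h
    cases w with
    | nil => exact absurd h (ne_of_gt (rr_cons_pos a s'))
    | cons b w' =>
      have hab : a = b := by
        by_contra hne
        rcases Nat.lt_or_ge a b with hlt | hge
        · -- a < b: rr (b::w') < 1/3^b ≤ 1/3^(a+1) < 2/3^(a+1) ≤ rr (a::s')
          have h1 : rr (b :: w') < 1 / 3 ^ b := rr_cons_ub b w'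
          have h2 : (1:ℝ) / 3 ^ b ≤ 1 / 3 ^ (a+1) := by
            apply div_le_div_of_nonneg_left one_pos.le (by positivity)
            apply pow_le_pow_right₀ (by norm_num) hlt
          have h3 : (1:ℝ) / 3 ^ (a+1) < 2 / 3 ^ (a+1) := by
            have : (0:ℝ) < 3 ^ (a+1) := by positivity
            rw [div_lt_div_iff_of_pos_right this]; norm_num
          have := rr_cons_lb a s'
          rw [h] at this
          linarith
        · have hlt : b < a := by omega
          have h1 : rr (a :: s') < 1 / 3 ^ a := rr_cons_ub a s'
          have h2 : (1:ℝ) / 3 ^ a ≤ 1 / 3 ^ (b+1) := by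
            apply div_le_div_of_nonneg_left one_pos.le (by positivity)
            apply pow_le_pow_right₀ (by norm_num) hlt
          have h3 : (1:ℝ) / 3 ^ (b+1) < 2 / 3 ^ (b+1) := by
            have : (0:ℝ) < 3 ^ (b+1) := by positivity
            rw [div_lt_div_iff_of_pos_right this]; norm_num
          have := rr_cons_lb b w'
          rw [← h] at this
          linarith
      subst hab
      have : rr s' = rr w' := by
        simp only [rr] at h
        field_simp at h
        linarith
      rw [ih this]

lemma pow3_le {m n : ℕ} (h : m ≤ n) : (1:ℝ) / 3 ^ n ≤ 1 / 3 ^ m := by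
  apply div_le_div_of_nonneg_left one_pos.le (by positivity)
  apply pow_le_pow_right₀ (by norm_num) h

/-- forward bridge: a point of `B1` close to `rr s` on the right is an extension. -/
lemma bridge (K : ℕ) : ∀ s w : List ℕ, rr s ≤ rr w → rr w < rr s + wt s / 3 ^ K →
    ∃ t, w = s ++ t ∧ (t = [] ∨ ∃ k t', t = k :: t' ∧ K ≤ k) := by
  intro s
  induction s with
  | nil =>
    intro w h1 h2
    simp only [rr, wt] at h2
    rw [zero_add] at h2
    cases w with
    | nil => exact ⟨[], rfl, Or.inl rfl⟩
    | cons k w' =>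
      refine ⟨k :: w', rfl, Or.inr ⟨k, w', rfl, ?_⟩⟩
      by_contra hk
      push_neg at hk
      have hk1 : k + 1 ≤ K := hk
      have l1 : (2:ℝ) / 3 ^ (k+1) ≤ rr (k :: w') := rr_cons_lb k w'
      have l2 : (1:ℝ) / 3 ^ K ≤ 1 / 3 ^ (k+1) := pow3_le hk1
      have l3 : (1:ℝ) / 3 ^ (k+1) < 2 / 3 ^ (k+1) := by
        have : (0:ℝ) < 3 ^ (k+1) := by positivity
        rw [div_lt_div_iff_of_pos_right this]; norm_num
      linarith
  | cons a s' ih =>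
    intro w h1 h2
    cases w with
    | nil =>
      simp only [rr] at h1
      have := rr_cons_pos a s'
      simp only [rr] at this ⊢
      linarith
    | cons b w' =>
      have hwt : wt (a :: s') / 3 ^ K ≤ 1 / 3 ^ (a+1) := by
        have h1 : wt (a :: s') = wt s' / 3 ^ (a+1) := rfl
        have h2 : (1:ℝ) ≤ 3 ^ K := one_le_pow₀ (by norm_num)
        have h3 : (0:ℝ) < 3 ^ (a+1) := by positivity
        have h4 := wt_le_one s'
        have h5 := wt_pos s'
        rw [h1, div_div, div_le_div_iff₀ (by positivity) h3]
        nlinarith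
      have hab : a = b := by
        by_contra hne
        rcases Nat.lt_or_ge a b with hlt | hge
        · -- a < b: rr w < 1/3^b ≤ 1/3^(a+1) < 2/3^(a+1) ≤ rr s: contradicts h1
          have u1 : rr (b :: w') < 1 / 3 ^ b := rr_cons_ub b w'
          have u2 : (1:ℝ) / 3 ^ b ≤ 1 / 3 ^ (a+1) := pow3_le hlt
          have u3 : (1:ℝ) / 3 ^ (a+1) < 2 / 3 ^ (a+1) := by
            have : (0:ℝ) < 3 ^ (a+1) := by positivity
            rw [div_lt_div_iff_of_pos_right this]; norm_num
          have u4 := rr_cons_lb a s'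
          linarith
        · -- b < a: rr w ≥ 2/3^(b+1) ≥ 2/3^a, but rr w < 1/3^a + 1/3^(a+1) < 2/3^a
          have hlt : b < a := by omega
          have u1 : (2:ℝ) / 3 ^ (b+1) ≤ rr (b :: w') := rr_cons_lb b w'
          have u2 : (1:ℝ) / 3 ^ a ≤ 1 / 3 ^ (b+1) := pow3_le (by omega)
          have u3 : rr (a :: s') < 1 / 3 ^ a := rr_cons_ub a s'
          have u4 : (1:ℝ) / 3 ^ (a+1) ≤ 1 / 3 ^ a := pow3_le (by omega)
          have e : (2:ℝ) / 3 ^ (b+1) = 1 / 3 ^ (b+1) + 1 / 3 ^ (b+1) := by ring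
          linarith
      subst hab
      -- reduce to tails
      simp only [rr] at h1 h2
      have hp : (0:ℝ) < 3 ^ (a+1) := by positivity
      have t1 : rr s' ≤ rr w' := by
        rw [div_le_div_iff_of_pos_right hp] at h1
        linarith
      have t2 : rr w' < rr s' + wt s' / 3 ^ K := by
        have hwteq : wt (a :: s') = wt s' / 3 ^ (a+1) := rfl
        rw [hwteq] at h2
        have key : (2 + rr w') / 3 ^ (a+1) < (2 + (rr s' + wt s' / 3 ^ K)) / 3 ^ (a+1) := by
          have e : (2 + (rr s' + wt s' / 3 ^ K)) / 3 ^ (a+1)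
              = (2 + rr s') / 3 ^ (a+1) + wt s' / 3 ^ (a+1) / 3 ^ K := by ring
          rw [e]
          exact h2
        rw [div_lt_div_iff_of_pos_right hp] at key
        linarith
      rcases ih w' t1 t2 with ⟨t, rfl, ht⟩
      exact ⟨t, rfl, ht⟩

/-- reverse bridge -/
lemma bridge_rev (K : ℕ) (s t : List ℕ) (h : t = [] ∨ ∃ k t', t = k :: t' ∧ K ≤ k) :
    rr s ≤ rr (s ++ t) ∧ rr (s ++ t) < rr s + wt s / 3 ^ K := by
  rw [rr_append]
  have hw := wt_pos s
  rcases h with rfl | ⟨k, t', rfl, hk⟩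
  · constructor
    · simp [rr]
    · simp only [rr, mul_zero, add_zero]
      have : (0:ℝ) < wt s / 3 ^ K := by positivity
      linarith
  · constructor
    · nlinarith [rr_nonneg (k :: t')]
    · have h1 : rr (k :: t') < 1 / 3 ^ k := rr_cons_ub k t'
      have h2 : (1:ℝ) / 3 ^ k ≤ 1 / 3 ^ K := pow3_le hk
      have : rr (k :: t') < 1 / 3 ^ K := lt_of_lt_of_le h1 h2
      have := mul_lt_mul_of_pos_left this hw
      rw [mul_one_div] at this
      linarith

lemma rr_cons_zero (t : List ℕ) : rr (0 :: t) = (2 + rr t) / 3 := by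
  simp [rr]

lemma rr_cons_succ (k : ℕ) (t : List ℕ) : rr ((k+1) :: t) = rr (k :: t) / 3 := by
  simp only [rr, div_div]
  ring_nf

lemma rr_div3 (s : List ℕ) : ∃ w, rr w = rr s / 3 := by
  cases s with
  | nil => exact ⟨[], by simp [rr]⟩
  | cons k t => exact ⟨(k+1) :: t, rr_cons_succ k t⟩

/-- every B1 element is in the range of rr -/
lemma B1_subset_range_rr : B1 ⊆ Set.range rr := by
  rintro x ⟨n, c, hc, rfl⟩
  induction n generalizing c with
  | zero => exact ⟨[], by simp [rr]⟩
  | succ n ih =>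
    have hsum : ∑ i ∈ Finset.range (n+1), c i / 3 ^ (i+1)
        = (c 0 + ∑ i ∈ Finset.range n, c (i+1) / 3 ^ (i+1)) / 3 := by
      rw [Finset.sum_range_succ' (fun i => c i / 3 ^ (i+1)) n]
      have key : ∀ i, c (i+1) / 3 ^ (i+1+1) = (c (i+1) / 3 ^ (i+1)) / 3 := by
        intro i; rw [div_div]; ring_nf
      simp only [key]
      rw [add_div, Finset.sum_div]
      norm_num
      ring
    rw [hsum]
    obtain ⟨w, hw⟩ := ih (fun i => c (i+1)) (fun i => hc (i+1))
    rw [← hw]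
    rcases hc 0 with h0 | h0
    · rw [h0, zero_add]
      exact rr_div3 w
    · rw [h0]
      exact ⟨0 :: w, rr_cons_zero w⟩

lemma shift_sum (d : ℝ) (n : ℕ) (c : ℕ → ℝ) :
    ∑ i ∈ Finset.range (n+1), (if i = 0 then d else c (i-1)) / 3 ^ (i+1)
      = (d + ∑ i ∈ Finset.range n, c i / 3 ^ (i+1)) / 3 := by
  rw [Finset.sum_range_succ' (fun i => (if i = 0 then d else c (i-1)) / 3 ^ (i+1)) n]
  have key : ∀ i, (if i + 1 = 0 then d else c (i+1-1)) / 3 ^ (i+1+1) = (c i / 3 ^ (i+1)) / 3 := by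
    intro i
    rw [if_neg (Nat.succ_ne_zero i), Nat.add_sub_cancel, div_div]
    ring_nf
  simp only [key, if_pos rfl]
  rw [add_div, Finset.sum_div]
  norm_num
  ring

/-- rr s is in B1 -/
lemma range_rr_subset_B1 : Set.range rr ⊆ B1 := by
  have hdiv3 : ∀ x ∈ B1, x / 3 ∈ B1 := by
    rintro x ⟨n, c, hc, rfl⟩
    refine ⟨n+1, fun i => if i = 0 then 0 else c (i-1),
      fun i => by by_cases h : i = 0 <;> simp [h, hc], ?_⟩
    rw [shift_sum 0 n c, zero_add]
  have htwo : ∀ x ∈ B1, (2 + x) / 3 ∈ B1 := by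
    rintro x ⟨n, c, hc, rfl⟩
    refine ⟨n+1, fun i => if i = 0 then 2 else c (i-1),
      fun i => by by_cases h : i = 0 <;> simp [h, hc], ?_⟩
    rw [shift_sum 2 n c]
  rintro x ⟨s, rfl⟩
  induction s with
  | nil => exact ⟨0, fun _ => 0, fun _ => Or.inl rfl, by simp [rr]⟩
  | cons k t ih =>
    induction k with
    | zero => rw [rr_cons_zero]; exact htwo _ ih
    | succ k ihk => rw [rr_cons_succ]; exact hdiv3 _ ihk

lemma B1_eq_range_rr : B1 = Set.range rr :=
  Set.Subset.antisymm B1_subset_range_rr range_rr_subset_B1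

lemma rr_mem_B1 (s : List ℕ) : rr s ∈ B1 := range_rr_subset_B1 ⟨s, rfl⟩

/-- rr s lies in every preCantorSet -/
lemma rr_mem_preCantorSet (m : ℕ) (s : List ℕ) : rr s ∈ preCantorSet m := by
  induction m generalizing s with
  | zero =>
    exact ⟨rr_nonneg s, le_of_lt (lt_of_lt_of_le (rr_lt_one s) (le_refl 1))⟩
  | succ m ih =>
    cases s with
    | nil => exact zero_mem_preCantorSet (m+1)
    | cons k t =>
      cases k with
      | zero => exact Or.inr ⟨rr t, ih t, (rr_cons_zero t).symm⟩
      | succ k => exact Or.inl ⟨rr (k :: t), ih (k :: t), (rr_cons_succ k t).symm⟩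

lemma B1_subset_cantorSet : B1 ⊆ cantorSet := by
  rw [B1_eq_range_rr]
  rintro x ⟨s, rfl⟩
  exact Set.mem_iInter.mpr fun m => rr_mem_preCantorSet m s

lemma preCantorSet_subset_unit : ∀ n, preCantorSet n ⊆ Icc (0:ℝ) 1 := by
  intro n
  induction n with
  | zero => exact le_refl _
  | succ n ih =>
    rintro y (⟨z, hz, rfl⟩ | ⟨z, hz, rfl⟩)
    · rcases ih hz with ⟨h0, h1⟩
      exact ⟨by show (0:ℝ) ≤ z/3; linarith, by show z/3 ≤ 1; linarith⟩
    · rcases ih hz with ⟨h0, h1⟩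
      exact ⟨by show (0:ℝ) ≤ (2+z)/3; linarith, by show (2+z)/3 ≤ 1; linarith⟩

lemma preCantorSet_dichotomy {n : ℕ} {y : ℝ} (hy : y ∈ preCantorSet (n+1)) :
    y ≤ 1/3 ∨ 2/3 ≤ y := by
  rcases hy with ⟨z, hz, rfl⟩ | ⟨z, hz, rfl⟩
  · rcases preCantorSet_subset_unit n hz with ⟨h0, h1⟩
    left; simp only; linarith
  · rcases preCantorSet_subset_unit n hz with ⟨h0, h1⟩
    right; simp only; linarith

/-- no interval of length > 3⁻ⁿ fits inside preCantorSet n -/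
lemma no_interval_preCantorSet : ∀ n : ℕ, ∀ u v : ℝ, 1 / 3 ^ n < v - u →
    ¬ (Ioo u v ⊆ preCantorSet n) := by
  intro n
  induction n with
  | zero =>
    intro u v huv hsub
    simp only [pow_zero] at huv
    set p := u + (v - u - 1) / 4 with hp
    set q := v - (v - u - 1) / 4 with hq
    have hpv : p ∈ Ioo u v := by constructor <;> (simp only [hp]; nlinarith)
    have hqv : q ∈ Ioo u v := by constructor <;> (simp only [hq]; nlinarith)
    have h1 := preCantorSet_subset_unit 0 (hsub hpv)
    have h2 := preCantorSet_subset_unit 0 (hsub hqv)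
    rcases h1 with ⟨hp0, hp1⟩
    rcases h2 with ⟨hq0, hq1⟩
    have hqp : q - p = (v - u + 1) / 2 := by simp only [hp, hq]; ring
    norm_num at huv
    clear_value p q
    linarith
  | succ n ih =>
    intro u v huv hsub
    have hhalf : (1:ℝ)/2 ∉ Ioo u v := by
      intro hmem
      rcases preCantorSet_dichotomy (hsub hmem) with h | h <;> norm_num at h
    have hcase : v ≤ 1/2 ∨ 1/2 ≤ u := by
      by_contra hcon
      push_neg at hcon
      exact hhalf ⟨hcon.2, hcon.1⟩
    have hpow : (0:ℝ) < 3 ^ n := by positivity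
    rcases hcase with hv | hu
    · -- left third: scale by 3
      apply ih (3*u) (3*v)
      · have : (1:ℝ)/3^(n+1) = (1/3^n)/3 := by rw [pow_succ]; ring
        rw [this] at huv
        linarith
      · intro z hz
        have hz3 : z / 3 ∈ Ioo u v := ⟨by linarith [hz.1], by linarith [hz.2]⟩
        rcases hsub hz3 with ⟨w, hw, hweq⟩ | ⟨w, hw, hweq⟩
        · have : z = w := by
            have : w / 3 = z / 3 := hweq
            linarith [this]
          rwa [this]
        · exfalso
          have hw0 : 0 ≤ w := (preCantorSet_subset_unit n hw).1
          have : (2 + w)/3 = z/3 := hweq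
          have hz2 : z = 2 + w := by linarith
          have : z < 3 * v := hz.2
          nlinarith
    · -- right third: map z ↦ z-2 after scaling
      apply ih (3*u - 2) (3*v - 2)
      · have : (1:ℝ)/3^(n+1) = (1/3^n)/3 := by rw [pow_succ]; ring
        rw [this] at huv
        linarith
      · intro z hz
        have hz3 : (z + 2) / 3 ∈ Ioo u v := ⟨by linarith [hz.1], by linarith [hz.2]⟩
        rcases hsub hz3 with ⟨w, hw, hweq⟩ | ⟨w, hw, hweq⟩
        · exfalso
          have hw1 : w ≤ 1 := (preCantorSet_subset_unit n hw).2
          have : w / 3 = (z + 2) / 3 := hweq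
          have hz2 : z = w - 2 := by linarith
          have : 3 * u - 2 < z := hz.1
          nlinarith
        · have : z = w := by
            have : (2 + w) / 3 = (z + 2) / 3 := hweq
            linarith
          rwa [this]

lemma cantorSet_no_Ico {x ε : ℝ} (hε : 0 < ε) : ¬ (Ico x (x + ε) ⊆ cantorSet) := by
  intro hsub
  obtain ⟨n, hn⟩ : ∃ n : ℕ, (1:ℝ) / 3 ^ n < ε := by
    obtain ⟨n, hn⟩ := exists_pow_lt_of_lt_one hε (show (1:ℝ)/3 < 1 by norm_num)
    refine ⟨n, ?_⟩
    rwa [div_pow, one_pow] at hn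
  apply no_interval_preCantorSet n x (x + ε) (by linarith)
  intro z hz
  have : z ∈ cantorSet := hsub ⟨le_of_lt hz.1, hz.2⟩
  exact Set.mem_iInter.mp this n

/-- Part 1: B1 is nowhere dense in the Hattori space H(A1). -/
theorem B1_isNowhereDense : @IsNowhereDense ℝ (hattori A1) B1 := by
  letI := hattori A1
  have hclosed : IsClosed cantorSet :=
    ⟨hattori_isOpen_of_isOpen isClosed_cantorSet.isOpen_compl⟩
  have hcl : closure B1 ⊆ cantorSet := closure_minimal B1_subset_cantorSet hclosed
  unfold IsNowhereDense
  by_contra h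
  rcases Set.nonempty_iff_ne_empty.2 h with ⟨x, hx⟩
  obtain ⟨ε, hε, hsub⟩ := hattori_exists_Ico (isOpen_interior (s := closure B1)) x hx
  exact cantorSet_no_Ico hε (hsub.trans (interior_subset.trans hcl))

/-! ### The tree embedding ψ into ℝ (Euclidean) -/

noncomputable def psi : List ℕ → ℝ
  | [] => 0
  | k :: t => (if Even k then 1 else -1) * (3/4) * (1/2 : ℝ) ^ (k/2)
      + (1/2 : ℝ) ^ (k/2) / 8 * psi t

noncomputable def lam : List ℕ → ℝ
  | [] => 1
  | k :: t => (1/2 : ℝ) ^ (k/2) / 8 * lam t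

lemma lam_pos (s : List ℕ) : 0 < lam s := by
  induction s with
  | nil => norm_num [lam]
  | cons k t ih => simp only [lam]; positivity

lemma psi_abs_le (s : List ℕ) : |psi s| ≤ 7/8 := by
  induction s with
  | nil => norm_num [psi]
  | cons k t ih =>
    simp only [psi]
    have hu1 : (1/2 : ℝ) ^ (k/2) ≤ 1 := pow_le_one₀ (by norm_num) (by norm_num)
    have hu0 : (0:ℝ) < (1/2 : ℝ) ^ (k/2) := by positivity
    rcases abs_le.1 ih with ⟨l, r⟩
    rcases em (Even k) with h | h <;> simp only [h, if_true, if_false, abs_le] <;>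
      constructor <;> nlinarith

lemma psi_cons_even {k : ℕ} (hk : Even k) (t : List ℕ) :
    (41/64 : ℝ) * (1/2)^(k/2) ≤ psi (k :: t) ∧ psi (k :: t) ≤ (55/64 : ℝ) * (1/2)^(k/2) := by
  simp only [psi, if_pos hk]
  have hu0 : (0:ℝ) < (1/2 : ℝ) ^ (k/2) := by positivity
  rcases abs_le.1 (psi_abs_le t) with ⟨l, r⟩
  constructor <;> nlinarith

lemma psi_cons_odd {k : ℕ} (hk : ¬ Even k) (t : List ℕ) :
    -(55/64 : ℝ) * (1/2)^(k/2) ≤ psi (k :: t) ∧ psi (k :: t) ≤ -(41/64 : ℝ) * (1/2)^(k/2) := by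
  simp only [psi, if_neg hk]
  have hu0 : (0:ℝ) < (1/2 : ℝ) ^ (k/2) := by positivity
  rcases abs_le.1 (psi_abs_le t) with ⟨l, r⟩
  constructor <;> nlinarith

lemma psi_cons_abs (k : ℕ) (t : List ℕ) :
    (41/64 : ℝ) * (1/2)^(k/2) ≤ |psi (k :: t)| ∧ |psi (k :: t)| ≤ (55/64 : ℝ) * (1/2)^(k/2) := by
  rcases em (Even k) with h | h
  · rcases psi_cons_even h t with ⟨l, r⟩
    have hu0 : (0:ℝ) < (1/2 : ℝ) ^ (k/2) := by positivity
    rw [abs_of_nonneg (by nlinarith)]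
    exact ⟨l, r⟩
  · rcases psi_cons_odd h t with ⟨l, r⟩
    have hu0 : (0:ℝ) < (1/2 : ℝ) ^ (k/2) := by positivity
    rw [abs_of_nonpos (by nlinarith)]
    constructor <;> nlinarith

lemma psi_append (s t : List ℕ) : psi (s ++ t) = psi s + lam s * psi t := by
  induction s with
  | nil => simp [psi, lam]
  | cons k s' ih =>
    simp only [List.cons_append, psi, lam]
    rw [ih]
    ring

lemma half_pow_le {m n : ℕ} (h : m ≤ n) : ((1:ℝ)/2) ^ n ≤ (1/2) ^ m :=
  pow_le_pow_of_le_one (by norm_num) (by norm_num) h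

/-- separation of subtrees with different head -/
lemma psi_head_sep {a b : ℕ} (hab : a ≠ b) (t t' : List ℕ) :
    (27/128 : ℝ) * (1/2)^(a/2) ≤ |psi (a :: t) - psi (b :: t')| := by
  set u : ℝ := (1/2 : ℝ)^(a/2) with hu
  set v : ℝ := (1/2 : ℝ)^(b/2) with hv
  have hu0 : (0:ℝ) < u := by positivity
  have hv0 : (0:ℝ) < v := by positivity
  rcases em (Even a) with ha | ha <;> rcases em (Even b) with hb | hb
  · -- both even
    have hj : a/2 ≠ b/2 := by
      intro h
      apply hab
      rcases ha with ⟨x, rfl⟩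
      rcases hb with ⟨y, rfl⟩
      omega
    rcases psi_cons_even ha t with ⟨la, ra⟩
    rcases psi_cons_even hb t' with ⟨lb, rb⟩
    rcases Nat.lt_or_ge (a/2) (b/2) with h | h
    · have hvu : v ≤ u/2 := by
        have : ((1:ℝ)/2)^(b/2) ≤ (1/2)^(a/2+1) := half_pow_le h
        rw [pow_succ] at this
        rw [hv, hu]
        linarith
      apply le_abs.2 (Or.inl ?_)
      nlinarith
    · have h' : b/2 < a/2 := lt_of_le_of_ne h (Ne.symm hj)
      have huv : u ≤ v/2 := by
        have : ((1:ℝ)/2)^(a/2) ≤ (1/2)^(b/2+1) := half_pow_le h'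
        rw [pow_succ] at this
        rw [hv, hu]
        linarith
      apply le_abs.2 (Or.inr ?_)
      nlinarith
  · rcases psi_cons_even ha t with ⟨la, ra⟩
    rcases psi_cons_odd hb t' with ⟨lb, rb⟩
    apply le_abs.2 (Or.inl ?_)
    nlinarith
  · rcases psi_cons_odd ha t with ⟨la, ra⟩
    rcases psi_cons_even hb t' with ⟨lb, rb⟩
    apply le_abs.2 (Or.inr ?_)
    nlinarith
  · have hj : a/2 ≠ b/2 := by
      intro h
      apply hab
      rcases Nat.not_even_iff_odd.1 ha with ⟨x, rfl⟩
      rcases Nat.not_even_iff_odd.1 hb with ⟨y, rfl⟩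
      omega
    rcases psi_cons_odd ha t with ⟨la, ra⟩
    rcases psi_cons_odd hb t' with ⟨lb, rb⟩
    rcases Nat.lt_or_ge (a/2) (b/2) with h | h
    · have hvu : v ≤ u/2 := by
        have : ((1:ℝ)/2)^(b/2) ≤ (1/2)^(a/2+1) := half_pow_le h
        rw [pow_succ] at this
        rw [hv, hu]
        linarith
      apply le_abs.2 (Or.inr ?_)
      nlinarith
    · have h' : b/2 < a/2 := lt_of_le_of_ne h (Ne.symm hj)
      have huv : u ≤ v/2 := by
        have : ((1:ℝ)/2)^(a/2) ≤ (1/2)^(b/2+1) := half_pow_le h'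
        rw [pow_succ] at this
        rw [hv, hu]
        linarith
      apply le_abs.2 (Or.inl ?_)
      nlinarith

lemma psi_cons_diff (a : ℕ) (s' w' : List ℕ) :
    psi (a :: w') - psi (a :: s') = (1/2 : ℝ)^(a/2)/8 * (psi w' - psi s') := by
  simp only [psi]
  ring

/-- ψ separates subtrees: points close to ψ s come from extensions of s. -/
lemma psi_sep (K : ℕ) : ∀ s : List ℕ, ∃ δ > 0, ∀ w : List ℕ, |psi w - psi s| < δ →
    ∃ t, w = s ++ t ∧ (t = [] ∨ ∃ k t', t = k :: t' ∧ K ≤ k) := by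
  intro s
  induction s with
  | nil =>
    refine ⟨(41/64 : ℝ) * (1/2)^K, by positivity, fun w hw => ?_⟩
    cases w with
    | nil => exact ⟨[], rfl, Or.inl rfl⟩
    | cons k w' =>
      refine ⟨k :: w', rfl, Or.inr ⟨k, w', rfl, ?_⟩⟩
      by_contra hk
      push_neg at hk
      have h1 : (41/64 : ℝ) * (1/2)^(k/2) ≤ |psi (k :: w')| := (psi_cons_abs k w').1
      have h2 : ((1:ℝ)/2)^k ≤ (1/2)^(k/2) := half_pow_le (Nat.div_le_self k 2)
      have h3 : ((1:ℝ)/2)^(K-1) ≤ (1/2)^k := half_pow_le (by omega)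
      have h4 : ((1:ℝ)/2)^K = (1/2)^(K-1) * (1/2) := by
        rw [← pow_succ]
        congr 1
        omega
      rw [show psi ([] : List ℕ) = 0 from rfl, sub_zero] at hw
      have h5 : (0:ℝ) < (1/2)^(K-1) := by positivity
      linarith
  | cons a s' ih =>
    obtain ⟨δ', hδ'pos, hδ'⟩ := ih
    set la : ℝ := (1/2 : ℝ)^(a/2)/8 with hla
    have hla0 : 0 < la := by rw [hla]; positivity
    refine ⟨min (min ((27/128 : ℝ) * (1/2)^(a/2)) ((41/64 : ℝ) * (1/2)^(a/2))) (la * δ'),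
      by positivity, fun w hw => ?_⟩
    have hw1 := lt_of_lt_of_le hw (le_trans (min_le_left _ _) (min_le_left _ _))
    have hw2 := lt_of_lt_of_le hw (le_trans (min_le_left _ _) (min_le_right _ _))
    have hw3 := lt_of_lt_of_le hw (min_le_right _ _)
    cases w with
    | nil =>
      exfalso
      rw [abs_sub_comm] at hw2
      simp only [psi, sub_zero] at hw2
      have := (psi_cons_abs a s').1
      simp only [psi] at this
      linarith
    | cons b w' =>
      by_cases hab : a = b
      · subst hab
        have hd : psi (a :: w') - psi (a :: s') = la * (psi w' - psi s') :=
          psi_cons_diff a s' w'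
        have : |psi w' - psi s'| < δ' := by
          rw [hd, abs_mul, abs_of_pos hla0] at hw3
          exact lt_of_mul_lt_mul_left hw3 hla0.le
        obtain ⟨t, rfl, ht⟩ := hδ' w' this
        exact ⟨t, rfl, ht⟩
      · exfalso
        have := psi_head_sep hab s' w'
        rw [abs_sub_comm] at this
        linarith

lemma psi_injective : Function.Injective psi := by
  intro s w h
  obtain ⟨δ, hδ, hsep⟩ := psi_sep 0 s
  obtain ⟨t, rfl, ht⟩ := hsep w (by rw [h]; simpa using hδ)
  rcases ht with rfl | ⟨k, t', rfl, -⟩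
  · rw [List.append_nil]
  · exfalso
    rw [psi_append] at h
    have h0 : lam s * psi (k :: t') = 0 := by linarith
    have h1 := (psi_cons_abs k t').1
    have h2 : (0:ℝ) < (41/64 : ℝ) * (1/2)^(k/2) := by positivity
    have h3 := lam_pos s
    rcases mul_eq_zero.1 h0 with h | h
    · linarith
    · rw [h] at h1
      simp only [abs_zero] at h1
      linarith

lemma psi_tail_small (s : List ℕ) {K k : ℕ} (t' : List ℕ) (hk : K ≤ k) :
    |psi (s ++ (k :: t')) - psi s| ≤ lam s * (55/64) * (1/2)^(K/2) := by
  rw [psi_append, add_sub_cancel_left, abs_mul, abs_of_pos (lam_pos s)]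
  have h1 := (psi_cons_abs k t').2
  have h2 : ((1:ℝ)/2)^(k/2) ≤ (1/2)^(K/2) := half_pow_le (Nat.div_le_div_right hk)
  have h3 := lam_pos s
  have h4 : (0:ℝ) ≤ |psi (k :: t')| := abs_nonneg _
  calc lam s * |psi (k :: t')| ≤ lam s * ((55/64) * (1/2)^(K/2)) := by nlinarith
  _ = lam s * (55/64) * (1/2)^(K/2) := by ring

lemma psi_single_even (j : ℕ) : psi [2*j] = (3/4 : ℝ) * (1/2)^j := by
  have he : Even (2*j) := even_two_mul j
  have hd : (2*j)/2 = j := by omega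
  simp only [psi, if_pos he, hd]
  norm_num

lemma psi_single_odd (j : ℕ) : psi [2*j+1] = -((3/4 : ℝ) * (1/2)^j) := by
  have he : ¬ Even (2*j+1) := by rw [Nat.even_iff]; omega
  have hd : (2*j+1)/2 = j := by omega
  simp only [psi, if_neg he, hd]
  norm_num

/-- accumulation from the right, within η -/
lemma psi_right_acc (s : List ℕ) {η : ℝ} (hη : 0 < η) :
    ∃ w : List ℕ, psi s < psi w ∧ psi w < psi s + η := by
  obtain ⟨j, hj⟩ := exists_pow_lt_of_lt_one (show (0:ℝ) < η / (lam s * (3/4)) by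
    have := lam_pos s; positivity) (show (1:ℝ)/2 < 1 by norm_num)
  refine ⟨s ++ [2*j], ?_, ?_⟩ <;> rw [psi_append, psi_single_even]
  · have := lam_pos s
    nlinarith [pow_pos (show (0:ℝ) < 1/2 by norm_num) j]
  · have hl := lam_pos s
    rw [lt_div_iff₀ (by positivity)] at hj
    nlinarith
  
/-- accumulation from the left, within η -/
lemma psi_left_acc (s : List ℕ) {η : ℝ} (hη : 0 < η) :
    ∃ w : List ℕ, psi s - η < psi w ∧ psi w < psi s := by
  obtain ⟨j, hj⟩ := exists_pow_lt_of_lt_one (show (0:ℝ) < η / (lam s * (3/4)) by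
    have := lam_pos s; positivity) (show (1:ℝ)/2 < 1 by norm_num)
  refine ⟨s ++ [2*j+1], ?_, ?_⟩ <;> rw [psi_append, psi_single_odd]
  · have hl := lam_pos s
    rw [lt_div_iff₀ (by positivity)] at hj
    nlinarith
  · have := lam_pos s
    nlinarith [pow_pos (show (0:ℝ) < 1/2 by norm_num) j]

/-! ### Assembling the homeomorphisms -/

def Qset : Set ℝ := Set.range psi

lemma B1_bij : Function.Bijective (fun s : List ℕ => (⟨rr s, rr_mem_B1 s⟩ : ↥B1)) := by
  constructor
  · intro a b h
    exact rr_injective (congrArg Subtype.val h)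
  · rintro ⟨x, hx⟩
    obtain ⟨s, rfl⟩ := B1_subset_range_rr hx
    exact ⟨s, rfl⟩

lemma Q_bij : Function.Bijective (fun s : List ℕ => (⟨psi s, ⟨s, rfl⟩⟩ : ↥Qset)) := by
  constructor
  · intro a b h
    exact psi_injective (congrArg Subtype.val h)
  · rintro ⟨x, s, rfl⟩
    exact ⟨s, rfl⟩

noncomputable def eB : List ℕ ≃ ↥B1 := Equiv.ofBijective _ B1_bij
noncomputable def eQ : List ℕ ≃ ↥Qset := Equiv.ofBijective _ Q_bij

lemma coe_eB (s : List ℕ) : ((eB s : ↥B1) : ℝ) = rr s := rfl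
lemma coe_eQ (s : List ℕ) : ((eQ s : ↥Qset) : ℝ) = psi s := rfl

lemma coe_eB_symm (x : ↥B1) : rr (eB.symm x) = ↑x := by
  conv_rhs => rw [← Equiv.apply_symm_apply eB x]
  rfl

lemma coe_eQ_symm (z : ↥Qset) : psi (eQ.symm z) = ↑z := by
  conv_rhs => rw [← Equiv.apply_symm_apply eQ z]
  rfl

lemma mem_B1_not_A1 (x : ↥B1) : (↑x : ℝ) ∉ A1 := Set.notMem_compl_iff.mpr x.2

lemma nhds_B1_basis (x : ↥B1) :
    (@nhds ↥B1 (TopologicalSpace.induced (Subtype.val) (hattori A1)) x).HasBasis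
      (fun ε : ℝ => 0 < ε) (fun ε => Subtype.val ⁻¹' Ico (↑x) (↑x + ε)) := by
  rw [@nhds_induced ℝ ↥B1 (hattori A1) Subtype.val x]
  exact (hattori_nhds_basis (mem_B1_not_A1 x)).comap _

lemma nhds_Q_basis (z : ↥Qset) :
    (𝓝 z).HasBasis (fun δ : ℝ => 0 < δ)
      (fun δ => Subtype.val ⁻¹' Metric.ball (↑z) δ) := by
  rw [nhds_subtype]
  exact (Metric.nhds_basis_ball).comap _

theorem cont_F : @Continuous ↥B1 ↥Qset
    (TopologicalSpace.induced (Subtype.val) (hattori A1)) _ (fun x => eQ (eB.symm x)) := by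
  letI : TopologicalSpace ↥B1 := TopologicalSpace.induced (Subtype.val) (hattori A1)
  rw [continuous_iff_continuousAt]
  intro x
  rw [ContinuousAt, (nhds_B1_basis x).tendsto_iff (nhds_Q_basis (eQ (eB.symm x)))]
  intro δ hδ
  set s := eB.symm x with hs
  have hlam := lam_pos s
  obtain ⟨m, hm⟩ := exists_pow_lt_of_lt_one
    (show 0 < δ / (lam s * (55/64)) by positivity) (show (1:ℝ)/2 < 1 by norm_num)
  refine ⟨wt s / 3 ^ (2*m), by have := wt_pos s; positivity, ?_⟩
  intro y hy
  set w := eB.symm y with hw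
  have hyw : rr w = ↑y := coe_eB_symm y
  have hxs : rr s = ↑x := coe_eB_symm x
  obtain ⟨t, hweq, ht⟩ := bridge (2*m) s w
    (by rw [hyw, hxs]; exact hy.1) (by rw [hyw, hxs]; exact hy.2)
  simp only [Set.mem_preimage, Metric.mem_ball, Real.dist_eq]
  have hcoe : ((eQ w : ↥Qset) : ℝ) = psi w := rfl
  have hcoe2 : ((eQ (eB.symm x) : ↥Qset) : ℝ) = psi s := rfl
  rw [hcoe, hcoe2, hweq]
  rcases ht with rfl | ⟨k, t', rfl, hk⟩
  · simpa using hδ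
  · have hbound := psi_tail_small s t' hk
    have hdiv : (2*m)/2 = m := by omega
    rw [hdiv] at hbound
    rw [lt_div_iff₀ (by positivity)] at hm
    calc |psi (s ++ k :: t') - psi s| ≤ lam s * (55/64) * (1/2)^m := hbound
    _ < δ := by nlinarith

theorem cont_G : @Continuous ↥Qset ↥B1 _
    (TopologicalSpace.induced (Subtype.val) (hattori A1)) (fun z => eB (eQ.symm z)) := by
  letI : TopologicalSpace ↥B1 := TopologicalSpace.induced (Subtype.val) (hattori A1)
  rw [continuous_iff_continuousAt]
  intro z
  rw [ContinuousAt, (nhds_Q_basis z).tendsto_iff (nhds_B1_basis (eB (eQ.symm z)))]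
  intro ε hε
  set s := eQ.symm z with hs
  obtain ⟨K, hK⟩ := exists_pow_lt_of_lt_one hε (show (1:ℝ)/3 < 1 by norm_num)
  obtain ⟨δ, hδ, hsep⟩ := psi_sep K s
  refine ⟨δ, hδ, ?_⟩
  intro u hu
  set w := eQ.symm u with hw
  have huw : psi w = ↑u := coe_eQ_symm u
  have hzs : psi s = ↑z := coe_eQ_symm z
  simp only [Set.mem_preimage, Metric.mem_ball, Real.dist_eq] at hu
  obtain ⟨t, hweq, ht⟩ := hsep w (by rw [huw, hzs]; exact hu)
  have ⟨hlow, hhigh⟩ := bridge_rev K s t ht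
  simp only [Set.mem_preimage]
  have hcoe : ((eB w : ↥B1) : ℝ) = rr w := rfl
  have hcoe2 : ((eB (eQ.symm z) : ↥B1) : ℝ) = rr s := rfl
  rw [mem_Ico, hcoe, hcoe2, hweq]
  refine ⟨hlow, lt_of_lt_of_le hhigh ?_⟩
  have hwt1 := wt_le_one s
  have hwt0 := wt_pos s
  have h13 : ((1:ℝ)/3)^K = 1/3^K := by rw [div_pow, one_pow]
  rw [h13] at hK
  have : wt s / 3 ^ K ≤ 1 / 3 ^ K := by
    apply div_le_div_of_nonneg_right hwt1 ?_ |>.trans (le_refl _)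
    positivity
  linarith

/-! ### Qset is a countable dense order without endpoints, homeomorphic to ℚ -/

instance Qset_denselyOrdered : DenselyOrdered ↥Qset := by
  constructor
  rintro ⟨a, hb⟩ ⟨b, s, rfl⟩ hab
  replace hab : a < psi s := hab
  obtain ⟨w, hw1, hw2⟩ := psi_left_acc s (show 0 < psi s - a by linarith)
  refine ⟨⟨psi w, ⟨w, rfl⟩⟩, ?_, ?_⟩ <;> refine Subtype.mk_lt_mk.2 ?_ <;> linarith

instance Qset_noMax : NoMaxOrder ↥Qset := by
  constructor
  rintro ⟨a, s, rfl⟩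
  obtain ⟨w, hw1, _⟩ := psi_right_acc s one_pos
  exact ⟨⟨psi w, ⟨w, rfl⟩⟩, Subtype.mk_lt_mk.2 hw1⟩

instance Qset_noMin : NoMinOrder ↥Qset := by
  constructor
  rintro ⟨a, s, rfl⟩
  obtain ⟨w, _, hw2⟩ := psi_left_acc s one_pos
  exact ⟨⟨psi w, ⟨w, rfl⟩⟩, Subtype.mk_lt_mk.2 hw2⟩

instance Qset_countable : Countable ↥Qset := (Set.countable_range psi).to_subtype

instance Qset_nonempty : Nonempty ↥Qset := ⟨⟨psi [], ⟨[], rfl⟩⟩⟩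

noncomputable def eeIso : ↥Qset ≃o ℚ := (Order.iso_of_countable_dense ↥Qset ℚ).some

lemma iso_symm_lt (y : ℚ) (x : ↥Qset) : eeIso.symm y < x ↔ y < eeIso x := by
  rw [← OrderIso.lt_iff_lt eeIso, OrderIso.apply_symm_apply]

lemma iso_lt_symm (x : ↥Qset) (y : ℚ) : x < eeIso.symm y ↔ eeIso x < y := by
  rw [← OrderIso.lt_iff_lt eeIso, OrderIso.apply_symm_apply]

lemma qset_lt_iff (a b : ↥Qset) : a < b ↔ (↑a : ℝ) < ↑b := Iff.rfl

lemma cont_ee : Continuous (eeIso : ↥Qset → ℚ) := by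
  rw [OrderTopology.topology_eq_generate_intervals (α := ℚ)]
  apply continuous_generateFrom_iff.mpr
  rintro s ⟨r, rfl | rfl⟩
  · have : (eeIso : ↥Qset → ℚ) ⁻¹' (Ioi r) = Subtype.val ⁻¹' (Ioi ↑(eeIso.symm r)) := by
      ext z
      simp only [Set.mem_preimage, Set.mem_Ioi]
      rw [← iso_symm_lt r z]
      exact qset_lt_iff _ _
    rw [this]
    exact isOpen_Ioi.preimage continuous_subtype_val
  · have : (eeIso : ↥Qset → ℚ) ⁻¹' (Iio r) = Subtype.val ⁻¹' (Iio ↑(eeIso.symm r)) := by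
      ext z
      simp only [Set.mem_preimage, Set.mem_Iio]
      rw [← iso_lt_symm z r]
      exact qset_lt_iff _ _
    rw [this]
    exact isOpen_Iio.preimage continuous_subtype_val

lemma cont_ee_symm : Continuous (eeIso.symm : ℚ → ↥Qset) := by
  apply continuous_induced_rng.2
  show Continuous fun q : ℚ => ((eeIso.symm q : ↥Qset) : ℝ)
  rw [OrderTopology.topology_eq_generate_intervals (α := ℝ)]
  apply continuous_generateFrom_iff.mpr
  rintro s ⟨b, rfl | rfl⟩
  · rw [isOpen_iff_mem_nhds]
    intro q hq
    simp only [Set.mem_preimage, Set.mem_Ioi] at hq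
    obtain ⟨sz, hsz⟩ := (eeIso.symm q).2
    obtain ⟨w, hw1, hw2⟩ := psi_left_acc sz
      (show 0 < psi sz - b by rw [hsz]; linarith)
    rw [hsz] at hw1 hw2
    set z' : ↥Qset := ⟨psi w, ⟨w, rfl⟩⟩ with hz'
    have hzz : eeIso z' < q := by
      have h1 : z' < eeIso.symm q := by rw [qset_lt_iff]; exact hw2
      rw [iso_lt_symm] at h1
      exact h1
    apply Filter.mem_of_superset ((isOpen_Ioi (a := eeIso z')).mem_nhds hzz)
    intro q' hq'
    simp only [Set.mem_preimage, Set.mem_Ioi] at hq' ⊢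
    rw [← iso_lt_symm, qset_lt_iff] at hq'
    calc b < psi w := by linarith
    _ < ↑(eeIso.symm q') := hq'
  · rw [isOpen_iff_mem_nhds]
    intro q hq
    simp only [Set.mem_preimage, Set.mem_Iio] at hq
    obtain ⟨sz, hsz⟩ := (eeIso.symm q).2
    obtain ⟨w, hw1, hw2⟩ := psi_right_acc sz
      (show 0 < b - psi sz by rw [hsz]; linarith)
    rw [hsz] at hw1 hw2
    set z' : ↥Qset := ⟨psi w, ⟨w, rfl⟩⟩ with hz'
    have hzz : q < eeIso z' := by
      have h1 : eeIso.symm q < z' := by rw [qset_lt_iff]; exact hw1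
      rw [iso_symm_lt] at h1
      exact h1
    apply Filter.mem_of_superset ((isOpen_Iio (a := eeIso z')).mem_nhds hzz)
    intro q' hq'
    simp only [Set.mem_preimage, Set.mem_Iio] at hq' ⊢
    rw [← iso_symm_lt, qset_lt_iff] at hq'
    calc (↑(eeIso.symm q') : ℝ) < psi w := hq'
    _ < b := by linarith

/-- B₁ is nowhere dense in H(A₁), and B₁ with the subspace topology from H(A₁)
is homeomorphic to ℚ with its usual topology. -/
theorem B1_nowhereDense_and_homeomorphic_rat :
    @IsNowhereDense ℝ (hattori A1) B1 ∧
    Nonempty (@Homeomorph ↥B1 ℚ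
      (TopologicalSpace.induced ((↑) : B1 → ℝ) (hattori A1)) inferInstance) := by
  refine ⟨B1_isNowhereDense, ?_⟩
  letI : TopologicalSpace ↥B1 := TopologicalSpace.induced ((↑) : B1 → ℝ) (hattori A1)
  have H1 : @Homeomorph ↥B1 ↥Qset _ _ :=
    { toEquiv := eB.symm.trans eQ
      continuous_toFun := cont_F
      continuous_invFun := cont_G }
  have H2 : ↥Qset ≃ₜ ℚ :=
    { toEquiv := eeIso.toEquiv
      continuous_toFun := cont_ee
      continuous_invFun := cont_ee_symm }
  exact ⟨H1.trans H2⟩
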